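/- Let m ≥ 3 and define T : ℤ × ℤ → ℤ by T(k,l) = 0 if k < 0 or l < 0, T(0,0) = 2m, T(1,1) = 4m, and T(k,l) = max{T(k−1, l−1), T(k−2, l−m)} for all other (k,l). Then T(k,l) = 0 unless l − k is a nonnegative multiple of m − 2, and T(k,k) = 4m for all k ≥ 1. -/

import Mathlib

theorem evenCycle_rank_function (m : ℤ) (hm : 3 ≤ m) (T : ℤ → ℤ → ℤ)
    (hneg : ∀ k l : ℤ, (k < 0 ∨ l < 0) → T k l = 0)
    (h00 : T 0 0 = 2 * m) (h11 : T 1 1 = 4 * m)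
    (hrec : ∀ k l : ℤ, 0 ≤ k → 0 ≤ l → ¬(k = 0 ∧ l = 0) → ¬(k = 1 ∧ l = 1) →
      T k l = max (T (k - 1) (l - 1)) (T (k - 2) (l - m))) :
    (∀ k l : ℤ, (¬ ∃ j : ℕ, l - k = (j : ℤ) * (m - 2)) → T k l = 0) ∧
      (∀ k : ℤ, 1 ≤ k → T k k = 4 * m) := by
  have A : ∀ n : ℕ, ∀ k l : ℤ, k ≤ (n : ℤ) →
      (¬ ∃ j : ℕ, l - k = (j : ℤ) * (m - 2)) → T k l = 0 := by
    intro n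
    induction n using Nat.strong_induction_on with
    | _ n ih =>
      intro k l hk hnot
      by_cases hk0 : k < 0
      · exact hneg k l (Or.inl hk0)
      by_cases hl0 : l < 0
      · exact hneg k l (Or.inr hl0)
      push_neg at hk0 hl0
      have hne00 : ¬(k = 0 ∧ l = 0) := by
        rintro ⟨rfl, rfl⟩; exact hnot ⟨0, by simp⟩
      have hne11 : ¬(k = 1 ∧ l = 1) := by
        rintro ⟨rfl, rfl⟩; exact hnot ⟨0, by simp⟩
      rw [hrec k l hk0 hl0 hne00 hne11]
      have h1 : T (k - 1) (l - 1) = 0 := by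
        by_cases h : k - 1 < 0
        · exact hneg _ _ (Or.inl h)
        · have hk1 : (1 : ℤ) ≤ k := by linarith
          have hn : 1 ≤ n := by
            by_contra h'
            push_neg at h'
            interval_cases n
            simp at hk
            omega
          refine ih (n - 1) (by omega) (k - 1) (l - 1) (by push_cast; omega) ?_
          rintro ⟨j, hj⟩
          exact hnot ⟨j, by linarith⟩
      have h2 : T (k - 2) (l - m) = 0 := by
        by_cases h : k - 2 < 0
        · exact hneg _ _ (Or.inl h)
        · have hk2 : (2 : ℤ) ≤ k := by linarith
          have hn2 : (2 : ℤ) ≤ (n : ℤ) := le_trans hk2 hk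
          have hn : 2 ≤ n := by exact_mod_cast hn2
          refine ih (n - 2) (by omega) (k - 2) (l - m) (by push_cast; omega) ?_
          rintro ⟨j, hj⟩
          refine hnot ⟨j + 1, ?_⟩
          push_cast
          linarith
      rw [h1, h2]; simp
  have Afin : ∀ k l : ℤ, (¬ ∃ j : ℕ, l - k = (j : ℤ) * (m - 2)) → T k l = 0 := by
    intro k l h
    by_cases hk : k < 0
    · exact hneg k l (Or.inl hk)
    · exact A k.toNat k l (by omega) h
  refine ⟨Afin, ?_⟩
  intro k hk
  refine Int.leInduction (motive := fun n _ => T n n = 4 * m) (m := 1) h11 ?_ k hk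
  intro k hk ihk
  have hne00 : ¬(k + 1 = 0 ∧ k + 1 = 0) := by omega
  have hne11 : ¬(k + 1 = 1 ∧ k + 1 = 1) := by omega
  rw [hrec (k + 1) (k + 1) (by omega) (by omega) hne00 hne11]
  have h2 : T (k + 1 - 2) (k + 1 - m) = 0 := by
    refine Afin _ _ ?_
    rintro ⟨j, hj⟩
    have : (0 : ℤ) ≤ (j : ℤ) * (m - 2) := mul_nonneg (by positivity) (by omega)
    omega
  have h1 : k + 1 - 1 = k := by ring
  rw [h1, h2, ihk]
  have : (0 : ℤ) ≤ 4 * m := by linarith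
  simp [this]
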